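/- Let h : ℝⁿ → ℝ be continuously differentiable and let ψ ∈ C¹_c(ℝ^{n+1}; ℝ^{n+1}) be a continuously differentiable vector field with compact support. Then ∫_{{(x,y) ∈ ℝⁿ×ℝ : y < h(x)}} div ψ(x,y) d(x,y) = ∫_{ℝⁿ} ψ(x, h(x))ᵀ (−∇h(x), 1) dx, i.e. the integral of the divergence of ψ over the open subgraph of h equals the integral over ℝⁿ of the inner product of ψ evaluated on the graph of h with the (non-normalized) upward normal vector (−∇h(x), 1) ∈ ℝ^{n+1}. -/

import Mathlib

open MeasureTheory
open scoped RealInnerProductSpace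

open Set

section Aux

variable {n : ℕ}

private lemma aux_slice_left {F : Type*} [NormedAddCommGroup F]
    {f : (EuclideanSpace ℝ (Fin n) × ℝ) → F} (hf : HasCompactSupport f) (y : ℝ) :
    HasCompactSupport (fun x : EuclideanSpace ℝ (Fin n) => f (x, y)) := by
  apply HasCompactSupport.intro (hf.image continuous_fst)
  intro x hx
  exact image_eq_zero_of_notMem_tsupport fun hm => hx ⟨(x, y), hm, rfl⟩

private lemma aux_slice_right {F : Type*} [NormedAddCommGroup F]
    {f : (EuclideanSpace ℝ (Fin n) × ℝ) → F} (hf : HasCompactSupport f)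
    (x : EuclideanSpace ℝ (Fin n)) :
    HasCompactSupport (fun y : ℝ => f (x, y)) := by
  apply HasCompactSupport.intro (hf.image continuous_snd)
  intro y hy
  exact image_eq_zero_of_notMem_tsupport fun hm => hy ⟨(x, y), hm, rfl⟩

private lemma aux_integral_fderiv_zero
    {φ : EuclideanSpace ℝ (Fin n) → ℝ} (hφ : ContDiff ℝ 1 φ) (hc : HasCompactSupport φ)
    (v : EuclideanSpace ℝ (Fin n)) :
    ∫ x, fderiv ℝ φ x v = 0 := by
  have hcont : Continuous fun x => fderiv ℝ φ x v :=
    (hφ.continuous_fderiv one_ne_zero).clm_apply continuous_const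
  have h1 : Integrable (fun x => fderiv ℝ φ x v) :=
    hcont.integrable_of_hasCompactSupport (hc.fderiv_apply ℝ v)
  have h2 : Integrable φ := hφ.continuous.integrable_of_hasCompactSupport hc
  have key := integral_mul_fderiv_eq_neg_fderiv_mul_of_integrable
    (μ := volume) (f := fun _ => (1:ℝ)) (g := φ) (v := v) ?_ ?_ ?_
    (fun x _ => differentiableAt_const (1:ℝ)) (fun x _ => hφ.differentiable one_ne_zero x)
  · simpa [fderiv_const] using key
  · simpa [fderiv_const] using
      (integrable_zero _ ℝ (volume : Measure (EuclideanSpace ℝ (Fin n))))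
  · simpa using h1
  · simpa using h2

end Aux

/-- **Divergence theorem on the subgraph (Lemma 3.13 / `lem:normal`).**
For `h : ℝⁿ → ℝ` continuously differentiable and `ψ ∈ C¹_c(ℝ^{n+1}; ℝ^{n+1})`,
the integral of `div ψ` over the open subgraph `{(x,y) : y < h(x)}` equals
`∫_{ℝⁿ} ψ(x, h(x))ᵀ (−∇h(x), 1) dx`. Points of `ℝ^{n+1}` are modeled as pairs
`(x, y) ∈ EuclideanSpace ℝ (Fin n) × ℝ` and the divergence is written as the sum of the
directional derivatives in the standard basis directions. -/
theorem stmt_5 (n : ℕ) (h : EuclideanSpace ℝ (Fin n) → ℝ) (hh : ContDiff ℝ 1 h)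
    (ψ : EuclideanSpace ℝ (Fin n) × ℝ → EuclideanSpace ℝ (Fin n) × ℝ)
    (hψ : ContDiff ℝ 1 ψ) (hψc : HasCompactSupport ψ) :
    (∫ p in {q : EuclideanSpace ℝ (Fin n) × ℝ | q.2 < h q.1},
        ((∑ i : Fin n, (fderiv ℝ ψ p (EuclideanSpace.single i 1, (0 : ℝ))).1 i)
          + (fderiv ℝ ψ p ((0 : EuclideanSpace ℝ (Fin n)), (1 : ℝ))).2))
      = ∫ x, (⟪(ψ (x, h x)).1, -gradient h x⟫ + (ψ (x, h x)).2) := by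
  classical
  set T : EuclideanSpace ℝ (Fin n) × ℝ → EuclideanSpace ℝ (Fin n) × ℝ := fun p => (p.1, p.2 + h p.1) with hTdef
  -- The shear map as a homeomorphism
  let Th : (EuclideanSpace ℝ (Fin n) × ℝ) ≃ₜ (EuclideanSpace ℝ (Fin n) × ℝ) :=
    { toFun := T
      invFun := fun p => (p.1, p.2 - h p.1)
      left_inv := fun p => by simp [hTdef]
      right_inv := fun p => by simp [hTdef]
      continuous_toFun := continuous_fst.prodMk (continuous_snd.add hh.continuous.fst')
      continuous_invFun := continuous_fst.prodMk (continuous_snd.sub hh.continuous.fst') }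
  have hTmp : MeasurePreserving T volume volume := by
    rw [Measure.volume_eq_prod]
    have hm : Measurable (Function.uncurry fun (a : EuclideanSpace ℝ (Fin n)) (y : ℝ) => y + h a) := by
      have := hh.continuous
      fun_prop
    exact (MeasurePreserving.id volume).skew_product (g := fun a y => y + h a) hm
      (Filter.Eventually.of_forall fun a => map_add_right_eq_self volume (h a))
  have hTemb : MeasurableEmbedding T := Th.measurableEmbedding
  have hpre : T ⁻¹' {q : EuclideanSpace ℝ (Fin n) × ℝ | q.2 < h q.1} = {p : EuclideanSpace ℝ (Fin n) × ℝ | p.2 < 0} := by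
    ext p; simp [hTdef]
  -- transfer to the half space
  rw [← hTmp.setIntegral_preimage_emb hTemb, hpre]
  -- the flattened field
  set g : EuclideanSpace ℝ (Fin n) × ℝ → EuclideanSpace ℝ (Fin n) × ℝ := fun p => ψ (T p) with hgdef
  have hTC : ContDiff ℝ 1 T := contDiff_fst.prodMk (contDiff_snd.add (hh.comp contDiff_fst))
  have hgC : ContDiff ℝ 1 g := hψ.comp hTC
  have hgc : HasCompactSupport g := hψc.comp_homeomorph Th
  have hDψT : HasCompactSupport (fun p : EuclideanSpace ℝ (Fin n) × ℝ => fderiv ℝ ψ (T p)) :=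
    (hψc.fderiv ℝ).comp_homeomorph Th
  -- derivative of g
  have hgd : ∀ p : EuclideanSpace ℝ (Fin n) × ℝ, HasFDerivAt g ((fderiv ℝ ψ (T p)).comp
      ((ContinuousLinearMap.fst ℝ (EuclideanSpace ℝ (Fin n)) ℝ).prod ((ContinuousLinearMap.snd ℝ (EuclideanSpace ℝ (Fin n)) ℝ) +
        (fderiv ℝ h p.1).comp (ContinuousLinearMap.fst ℝ (EuclideanSpace ℝ (Fin n)) ℝ)))) p := by
    intro p
    have hTd : HasFDerivAt T ((ContinuousLinearMap.fst ℝ (EuclideanSpace ℝ (Fin n)) ℝ).prod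
        ((ContinuousLinearMap.snd ℝ (EuclideanSpace ℝ (Fin n)) ℝ) +
          (fderiv ℝ h p.1).comp (ContinuousLinearMap.fst ℝ (EuclideanSpace ℝ (Fin n)) ℝ))) p :=
      (hasFDerivAt_fst).prodMk ((hasFDerivAt_snd).add
        (((hh.differentiable one_ne_zero p.1).hasFDerivAt).comp p hasFDerivAt_fst))
    exact ((hψ.differentiable one_ne_zero (T p)).hasFDerivAt).comp p hTd
  -- the three families of integrands on the half space
  set u : Fin n → EuclideanSpace ℝ (Fin n) × ℝ → ℝ :=
    fun i p => (fderiv ℝ g p (EuclideanSpace.single i 1, (0:ℝ))).1 i with hudef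
  set w : EuclideanSpace ℝ (Fin n) × ℝ → ℝ := fun p => (fderiv ℝ g p ((0:EuclideanSpace ℝ (Fin n)), (1:ℝ))).2 with hwdef
  set r : Fin n → EuclideanSpace ℝ (Fin n) × ℝ → ℝ :=
    fun i p => fderiv ℝ h p.1 (EuclideanSpace.single i 1) *
      (fderiv ℝ ψ (T p) ((0:EuclideanSpace ℝ (Fin n)), (1:ℝ))).1 i with hrdef
  -- pointwise identity
  have hpoint : ∀ p : EuclideanSpace ℝ (Fin n) × ℝ,
      (∑ i : Fin n, (fderiv ℝ ψ (T p) (EuclideanSpace.single i 1, (0 : ℝ))).1 i)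
        + (fderiv ℝ ψ (T p) ((0:EuclideanSpace ℝ (Fin n)), (1:ℝ))).2
      = (∑ i : Fin n, (u i p - r i p)) + w p := by
    intro p
    have hfg : fderiv ℝ g p = (fderiv ℝ ψ (T p)).comp
        ((ContinuousLinearMap.fst ℝ (EuclideanSpace ℝ (Fin n)) ℝ).prod ((ContinuousLinearMap.snd ℝ (EuclideanSpace ℝ (Fin n)) ℝ) +
          (fderiv ℝ h p.1).comp (ContinuousLinearMap.fst ℝ (EuclideanSpace ℝ (Fin n)) ℝ))) := (hgd p).fderiv
    have hw : w p = (fderiv ℝ ψ (T p) ((0:EuclideanSpace ℝ (Fin n)), (1:ℝ))).2 := by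
      simp [hwdef, hfg]
    have hu : ∀ i, u i p - r i p
        = (fderiv ℝ ψ (T p) (EuclideanSpace.single i 1, (0 : ℝ))).1 i := by
      intro i
      have hsplit : ((EuclideanSpace.single i 1 : EuclideanSpace ℝ (Fin n)),
            fderiv ℝ h p.1 (EuclideanSpace.single i 1))
          = (EuclideanSpace.single i 1, (0:ℝ))
            + (fderiv ℝ h p.1 (EuclideanSpace.single i 1)) • ((0 : EuclideanSpace ℝ (Fin n)), (1:ℝ)) := by
        simp [Prod.ext_iff]
      have : u i p = (fderiv ℝ ψ (T p) (EuclideanSpace.single i 1, (0 : ℝ))).1 i + r i p := by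
        simp only [hudef, hfg, ContinuousLinearMap.comp_apply,
          ContinuousLinearMap.prod_apply, ContinuousLinearMap.add_apply,
          ContinuousLinearMap.coe_fst', ContinuousLinearMap.coe_snd',
          ContinuousLinearMap.coe_comp', Function.comp_apply]
        rw [show ((EuclideanSpace.single i 1 : EuclideanSpace ℝ (Fin n)), (0:ℝ) +
            fderiv ℝ h p.1 (EuclideanSpace.single i 1))
          = (EuclideanSpace.single i 1, (0:ℝ))
            + (fderiv ℝ h p.1 (EuclideanSpace.single i 1)) • ((0 : EuclideanSpace ℝ (Fin n)), (1:ℝ)) by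
          simpa using hsplit]
        rw [map_add, ContinuousLinearMap.map_smul]
        simp [hrdef, Prod.fst_add, Prod.smul_fst, PiLp.add_apply, PiLp.smul_apply,
          smul_eq_mul, mul_comm]
      rw [this]; ring
    rw [hw, Finset.sum_congr rfl fun i _ => hu i]

  -- continuity of derivatives
  have hcontDg : Continuous (fderiv ℝ g) := hgC.continuous_fderiv one_ne_zero
  have hcontDψ : Continuous (fderiv ℝ ψ) := hψ.continuous_fderiv one_ne_zero
  have hcontDh : Continuous (fderiv ℝ h) := hh.continuous_fderiv one_ne_zero
  have hTcont : Continuous T := Th.continuous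
  -- integrability of the three families
  have hui_int : ∀ i, Integrable (u i) := by
    intro i
    refine Continuous.integrable_of_hasCompactSupport ?_ ?_
    · exact (EuclideanSpace.proj i).continuous.comp
        (continuous_fst.comp (hcontDg.clm_apply continuous_const))
    · exact (hgc.fderiv ℝ).comp_left
        (g := fun L : (EuclideanSpace ℝ (Fin n) × ℝ) →L[ℝ] (EuclideanSpace ℝ (Fin n) × ℝ) =>
          (L (EuclideanSpace.single i 1, (0:ℝ))).1 i) (by simp)
  have hw_int : Integrable w := by
    refine Continuous.integrable_of_hasCompactSupport ?_ ?_
    · exact continuous_snd.comp (hcontDg.clm_apply continuous_const)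
    · exact (hgc.fderiv ℝ).comp_left
        (g := fun L : (EuclideanSpace ℝ (Fin n) × ℝ) →L[ℝ] (EuclideanSpace ℝ (Fin n) × ℝ) =>
          (L ((0 : EuclideanSpace ℝ (Fin n)), (1:ℝ))).2) (by simp)
  have hri_int : ∀ i, Integrable (r i) := by
    intro i
    refine Continuous.integrable_of_hasCompactSupport ?_ ?_
    · exact ((hcontDh.comp continuous_fst).clm_apply continuous_const).mul
        ((EuclideanSpace.proj i).continuous.comp
          (continuous_fst.comp ((hcontDψ.comp hTcont).clm_apply continuous_const)))
    · exact (hDψT.comp_left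
        (g := fun L : (EuclideanSpace ℝ (Fin n) × ℝ) →L[ℝ] (EuclideanSpace ℝ (Fin n) × ℝ) =>
          (L ((0 : EuclideanSpace ℝ (Fin n)), (1:ℝ))).1 i) (by simp)).mul_left
  -- Fubini helpers
  have hS0 : {p : EuclideanSpace ℝ (Fin n) × ℝ | p.2 < 0}
      = (univ : Set (EuclideanSpace ℝ (Fin n))) ×ˢ Iio (0:ℝ) := by
    ext p; simp
  have fub : ∀ f : EuclideanSpace ℝ (Fin n) × ℝ → ℝ, Integrable f →
      ∫ p in {p : EuclideanSpace ℝ (Fin n) × ℝ | p.2 < 0}, f p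
        = ∫ x, ∫ y in Iio (0:ℝ), f (x, y) := by
    intro f hf
    rw [hS0, Measure.volume_eq_prod]
    rw [setIntegral_prod]
    · rw [Measure.restrict_univ]
    · rw [← Measure.volume_eq_prod]; exact hf.integrableOn
  have hrestr : ∀ f : EuclideanSpace ℝ (Fin n) × ℝ → ℝ, Integrable f →
      Integrable f ((volume : Measure (EuclideanSpace ℝ (Fin n))).prod
        ((volume : Measure ℝ).restrict (Iio (0:ℝ)))) := by
    intro f hf
    have h1 : (volume : Measure (EuclideanSpace ℝ (Fin n))).prod
        ((volume : Measure ℝ).restrict (Iio (0:ℝ)))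
        = ((volume : Measure (EuclideanSpace ℝ (Fin n))).prod (volume : Measure ℝ)).restrict
            ((univ : Set (EuclideanSpace ℝ (Fin n))) ×ˢ Iio (0:ℝ)) := by
      rw [← Measure.prod_restrict, Measure.restrict_univ]
    rw [h1, ← Measure.volume_eq_prod]
    exact hf.integrableOn
  have fub2 : ∀ f : EuclideanSpace ℝ (Fin n) × ℝ → ℝ, Integrable f →
      ∫ p in {p : EuclideanSpace ℝ (Fin n) × ℝ | p.2 < 0}, f p
        = ∫ y in Iio (0:ℝ), ∫ x, f (x, y) := by
    intro f hf
    rw [hS0, Measure.volume_eq_prod]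
    have h2 : ((volume : Measure (EuclideanSpace ℝ (Fin n))).prod (volume : Measure ℝ)).restrict
          ((univ : Set (EuclideanSpace ℝ (Fin n))) ×ˢ Iio (0:ℝ))
        = (volume : Measure (EuclideanSpace ℝ (Fin n))).prod
          ((volume : Measure ℝ).restrict (Iio (0:ℝ))) := by
      rw [← Measure.prod_restrict, Measure.restrict_univ]
    rw [h2]
    exact integral_prod_symm f (hrestr f hf)
  -- the horizontal terms vanish
  have hu_zero : ∀ i, ∫ p in {p : EuclideanSpace ℝ (Fin n) × ℝ | p.2 < 0}, u i p = 0 := by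
    intro i
    rw [fub2 _ (hui_int i)]
    have hinner : ∀ y : ℝ, ∫ x, u i (x, y) = 0 := by
      intro y
      have hφC : ContDiff ℝ 1 (fun x : EuclideanSpace ℝ (Fin n) => (g (x, y)).1 i) := by
        have h1 : ContDiff ℝ 1 (fun x : EuclideanSpace ℝ (Fin n) => g (x, y)) :=
          hgC.comp (contDiff_id.prodMk contDiff_const)
        exact (((EuclideanSpace.proj i).comp
          (ContinuousLinearMap.fst ℝ (EuclideanSpace ℝ (Fin n)) ℝ)).contDiff).comp h1
      have hφc : HasCompactSupport (fun x : EuclideanSpace ℝ (Fin n) => (g (x, y)).1 i) :=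
        (aux_slice_left hgc y).comp_left
          (g := fun q : EuclideanSpace ℝ (Fin n) × ℝ => q.1 i) (by simp)
      have hder : ∀ x : EuclideanSpace ℝ (Fin n),
          fderiv ℝ (fun x : EuclideanSpace ℝ (Fin n) => (g (x, y)).1 i) x
            (EuclideanSpace.single i 1) = u i (x, y) := by
        intro x
        have h0 : HasFDerivAt (fun x : EuclideanSpace ℝ (Fin n) => ((x : EuclideanSpace ℝ (Fin n)), y))
            (ContinuousLinearMap.inl ℝ (EuclideanSpace ℝ (Fin n)) ℝ) x :=
          (hasFDerivAt_id x).prodMk (hasFDerivAt_const y x)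
        have h1 : HasFDerivAt (fun x : EuclideanSpace ℝ (Fin n) => g (x, y))
            ((fderiv ℝ g (x, y)).comp (ContinuousLinearMap.inl ℝ (EuclideanSpace ℝ (Fin n)) ℝ)) x :=
          by have := ((hgC.differentiable one_ne_zero (x, y)).hasFDerivAt).comp x h0; exact this
        have h2 := (((EuclideanSpace.proj i).comp
          (ContinuousLinearMap.fst ℝ (EuclideanSpace ℝ (Fin n)) ℝ)).hasFDerivAt).comp x h1
        have h3 : HasFDerivAt (fun x : EuclideanSpace ℝ (Fin n) => (g (x, y)).1 i)
            (((EuclideanSpace.proj i).comp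
              (ContinuousLinearMap.fst ℝ (EuclideanSpace ℝ (Fin n)) ℝ)).comp
              ((fderiv ℝ g (x, y)).comp
                (ContinuousLinearMap.inl ℝ (EuclideanSpace ℝ (Fin n)) ℝ))) x := h2
        rw [h3.fderiv]
        simp [hudef]
      rw [← aux_integral_fderiv_zero hφC hφc (EuclideanSpace.single i 1)]
      exact integral_congr_ae (Filter.Eventually.of_forall fun x => (hder x).symm)
    simp only [hinner, integral_zero]
  -- the vertical term
  have hw_val : ∫ p in {p : EuclideanSpace ℝ (Fin n) × ℝ | p.2 < 0}, w p
      = ∫ x, (ψ (x, h x)).2 := by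
    rw [fub _ hw_int]
    refine integral_congr_ae (Filter.Eventually.of_forall fun x => ?_)
    have hφC : ContDiff ℝ 1 (fun y : ℝ => (g (x, y)).2) := by
      have h1 : ContDiff ℝ 1 (fun y : ℝ => g (x, y)) := hgC.comp (contDiff_const.prodMk contDiff_id)
      exact ((ContinuousLinearMap.snd ℝ (EuclideanSpace ℝ (Fin n)) ℝ).contDiff).comp h1
    have hφc : HasCompactSupport (fun y : ℝ => (g (x, y)).2) :=
      (aux_slice_right hgc x).comp_left
        (g := fun q : EuclideanSpace ℝ (Fin n) × ℝ => q.2) rfl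
    have hder : ∀ y : ℝ, HasDerivAt (fun y : ℝ => (g (x, y)).2) (w (x, y)) y := by
      intro y
      have h0 : HasDerivAt (fun y : ℝ => ((x : EuclideanSpace ℝ (Fin n)), y))
          (((0 : EuclideanSpace ℝ (Fin n)), (1:ℝ))) y :=
        (hasDerivAt_const y x).prodMk (hasDerivAt_id y)
      have h1 : HasDerivAt (fun y : ℝ => g (x, y))
          (fderiv ℝ g (x, y) ((0 : EuclideanSpace ℝ (Fin n)), (1:ℝ))) y :=
        ((hgC.differentiable one_ne_zero (x, y)).hasFDerivAt).comp_hasDerivAt y h0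
      have h2 := ((ContinuousLinearMap.snd ℝ (EuclideanSpace ℝ (Fin n)) ℝ).hasFDerivAt).comp_hasDerivAt y h1
      simpa [hwdef, Function.comp_def] using h2
    calc ∫ y in Iio (0:ℝ), w (x, y)
        = ∫ y in Iic (0:ℝ), w (x, y) := (integral_Iic_eq_integral_Iio).symm
      _ = ∫ y in Iic (0:ℝ), deriv (fun y : ℝ => (g (x, y)).2) y :=
          integral_congr_ae (Filter.Eventually.of_forall fun y => ((hder y).deriv).symm)
      _ = (g (x, 0)).2 := HasCompactSupport.integral_Iic_deriv_eq hφC hφc 0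
      _ = (ψ (x, h x)).2 := by simp [hgdef, hTdef]
  -- the boundary-slope terms
  have hr_val : ∀ i, ∫ p in {p : EuclideanSpace ℝ (Fin n) × ℝ | p.2 < 0}, r i p
      = ∫ x, fderiv ℝ h x (EuclideanSpace.single i 1) * (ψ (x, h x)).1 i := by
    intro i
    rw [fub _ (hri_int i)]
    refine integral_congr_ae (Filter.Eventually.of_forall fun x => ?_)
    have hφC : ContDiff ℝ 1 (fun y : ℝ => (g (x, y)).1 i) := by
      have h1 : ContDiff ℝ 1 (fun y : ℝ => g (x, y)) := hgC.comp (contDiff_const.prodMk contDiff_id)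
      exact (((EuclideanSpace.proj i).comp
        (ContinuousLinearMap.fst ℝ (EuclideanSpace ℝ (Fin n)) ℝ)).contDiff).comp h1
    have hφc : HasCompactSupport (fun y : ℝ => (g (x, y)).1 i) :=
      (aux_slice_right hgc x).comp_left
        (g := fun q : EuclideanSpace ℝ (Fin n) × ℝ => q.1 i) (by simp)
    have hder : ∀ y : ℝ, HasDerivAt (fun y : ℝ => (g (x, y)).1 i)
        ((fderiv ℝ ψ (T (x, y)) ((0 : EuclideanSpace ℝ (Fin n)), (1:ℝ))).1 i) y := by
      intro y
      have h0 : HasDerivAt (fun y : ℝ => T (x, y))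
          (((0 : EuclideanSpace ℝ (Fin n)), (1:ℝ))) y := by
        have : HasDerivAt (fun y : ℝ => ((x : EuclideanSpace ℝ (Fin n)), y + h x))
            (((0 : EuclideanSpace ℝ (Fin n)), (1:ℝ))) y :=
          (hasDerivAt_const y x).prodMk ((hasDerivAt_id y).add_const (h x))
        simpa [hTdef] using this
      have h1 : HasDerivAt (fun y : ℝ => ψ (T (x, y)))
          (fderiv ℝ ψ (T (x, y)) ((0 : EuclideanSpace ℝ (Fin n)), (1:ℝ))) y :=
        ((hψ.differentiable one_ne_zero (T (x, y))).hasFDerivAt).comp_hasDerivAt y h0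
      have h2 := (((EuclideanSpace.proj i).comp
        (ContinuousLinearMap.fst ℝ (EuclideanSpace ℝ (Fin n)) ℝ)).hasFDerivAt).comp_hasDerivAt y h1
      simpa [hgdef, Function.comp_def] using h2
    have key : ∫ y in Iio (0:ℝ),
        (fderiv ℝ ψ (T (x, y)) ((0 : EuclideanSpace ℝ (Fin n)), (1:ℝ))).1 i
        = (ψ (x, h x)).1 i := by
      calc ∫ y in Iio (0:ℝ),
          (fderiv ℝ ψ (T (x, y)) ((0 : EuclideanSpace ℝ (Fin n)), (1:ℝ))).1 i
          = ∫ y in Iic (0:ℝ),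
            (fderiv ℝ ψ (T (x, y)) ((0 : EuclideanSpace ℝ (Fin n)), (1:ℝ))).1 i :=
            (integral_Iic_eq_integral_Iio).symm
        _ = ∫ y in Iic (0:ℝ), deriv (fun y : ℝ => (g (x, y)).1 i) y :=
            integral_congr_ae (Filter.Eventually.of_forall fun y => ((hder y).deriv).symm)
        _ = (g (x, 0)).1 i := HasCompactSupport.integral_Iic_deriv_eq hφC hφc 0
        _ = (ψ (x, h x)).1 i := by simp [hgdef, hTdef]
    calc ∫ y in Iio (0:ℝ), r i (x, y)
        = ∫ y in Iio (0:ℝ), fderiv ℝ h x (EuclideanSpace.single i 1) *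
            (fderiv ℝ ψ (T (x, y)) ((0 : EuclideanSpace ℝ (Fin n)), (1:ℝ))).1 i := by
          simp only [hrdef]
      _ = fderiv ℝ h x (EuclideanSpace.single i 1) * ∫ y in Iio (0:ℝ),
            (fderiv ℝ ψ (T (x, y)) ((0 : EuclideanSpace ℝ (Fin n)), (1:ℝ))).1 i :=
          integral_const_mul _ _
      _ = fderiv ℝ h x (EuclideanSpace.single i 1) * (ψ (x, h x)).1 i := by rw [key]
  -- integrability on the boundary
  have hq_cont : Continuous (fun x : EuclideanSpace ℝ (Fin n) => ψ (x, h x)) :=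
    hψ.continuous.comp (continuous_id.prodMk hh.continuous)
  have hqc : HasCompactSupport (fun x : EuclideanSpace ℝ (Fin n) => ψ (x, h x)) := by
    have := aux_slice_left hgc (0:ℝ)
    simpa [hgdef, hTdef] using this
  have int_b : Integrable (fun x : EuclideanSpace ℝ (Fin n) => (ψ (x, h x)).2) :=
    Continuous.integrable_of_hasCompactSupport (continuous_snd.comp hq_cont)
      (hqc.comp_left (g := fun q : EuclideanSpace ℝ (Fin n) × ℝ => q.2) rfl)
  have int_a : ∀ i, Integrable (fun x : EuclideanSpace ℝ (Fin n) =>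
      fderiv ℝ h x (EuclideanSpace.single i 1) * (ψ (x, h x)).1 i) := by
    intro i
    refine Continuous.integrable_of_hasCompactSupport ?_ ?_
    · exact (hcontDh.clm_apply continuous_const).mul
        ((EuclideanSpace.proj i).continuous.comp (continuous_fst.comp hq_cont))
    · exact (hqc.comp_left (g := fun q : EuclideanSpace ℝ (Fin n) × ℝ => q.1 i) (by simp)).mul_left
  -- rewriting the inner product on the right-hand side
  have hgrad : ∀ (x : EuclideanSpace ℝ (Fin n)) (v : EuclideanSpace ℝ (Fin n)),
      ⟪v, -gradient h x⟫ = -(∑ i : Fin n,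
        fderiv ℝ h x (EuclideanSpace.single i 1) * v i) := by
    intro x v
    have hvdec : (v : EuclideanSpace ℝ (Fin n))
        = ∑ i : Fin n, v i • (EuclideanSpace.single i (1:ℝ)) := by
      have := (EuclideanSpace.basisFun (Fin n) ℝ).sum_repr v
      simp only [EuclideanSpace.basisFun_apply, EuclideanSpace.basisFun_repr] at this
      exact this.symm
    have hv : fderiv ℝ h x v
        = ∑ i : Fin n, v i * fderiv ℝ h x (EuclideanSpace.single i 1) := by
      conv_lhs => rw [hvdec]
      rw [map_sum]
      simp [smul_eq_mul]
    have hg : ⟪gradient h x, v⟫ = fderiv ℝ h x v := by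
      unfold gradient
      exact InnerProductSpace.toDual_symm_apply
    rw [inner_neg_right, real_inner_comm, hg, hv]
    congr 1
    exact Finset.sum_congr rfl fun i _ => mul_comm _ _
  -- assemble
  have hsum_int : Integrable (fun p : EuclideanSpace ℝ (Fin n) × ℝ =>
      (∑ i : Fin n, (u i p - r i p))) :=
    integrable_finset_sum _ (fun i _ => (hui_int i).sub (hri_int i))
  calc ∫ p in {p : EuclideanSpace ℝ (Fin n) × ℝ | p.2 < 0},
        ((∑ i : Fin n, (fderiv ℝ ψ (T p) (EuclideanSpace.single i 1, (0 : ℝ))).1 i)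
          + (fderiv ℝ ψ (T p) ((0 : EuclideanSpace ℝ (Fin n)), (1 : ℝ))).2)
      = ∫ p in {p : EuclideanSpace ℝ (Fin n) × ℝ | p.2 < 0},
          ((∑ i : Fin n, (u i p - r i p)) + w p) :=
        integral_congr_ae (Filter.Eventually.of_forall fun p => hpoint p)
    _ = (∑ i : Fin n, ((∫ p in {p : EuclideanSpace ℝ (Fin n) × ℝ | p.2 < 0}, u i p)
          - ∫ p in {p : EuclideanSpace ℝ (Fin n) × ℝ | p.2 < 0}, r i p))
        + ∫ p in {p : EuclideanSpace ℝ (Fin n) × ℝ | p.2 < 0}, w p := by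
        rw [integral_add (hsum_int.integrableOn) (hw_int.integrableOn),
          integral_finset_sum (μ := volume.restrict {p : EuclideanSpace ℝ (Fin n) × ℝ | p.2 < 0})
            Finset.univ (f := fun i p => u i p - r i p)
            (fun i _ => ((hui_int i).sub (hri_int i)).integrableOn)]
        congr 1
        exact Finset.sum_congr rfl fun i _ =>
          integral_sub (hui_int i).integrableOn (hri_int i).integrableOn
    _ = -(∑ i : Fin n, ∫ x, fderiv ℝ h x (EuclideanSpace.single i 1) * (ψ (x, h x)).1 i)
        + ∫ x, (ψ (x, h x)).2 := by
        rw [hw_val]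
        congr 1
        simp only [hu_zero, hr_val, zero_sub]
        exact Finset.sum_neg_distrib _
    _ = ∫ x, (⟪(ψ (x, h x)).1, -gradient h x⟫ + (ψ (x, h x)).2) := by
        have hrw : ∫ x, (⟪(ψ (x, h x)).1, -gradient h x⟫ + (ψ (x, h x)).2)
            = ∫ x, (-(∑ i : Fin n,
                fderiv ℝ h x (EuclideanSpace.single i 1) * (ψ (x, h x)).1 i)
              + (ψ (x, h x)).2) :=
          integral_congr_ae (Filter.Eventually.of_forall fun x => by simp only [hgrad])
        have hneg : Integrable (fun x : EuclideanSpace ℝ (Fin n) =>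
            -(∑ i : Fin n, fderiv ℝ h x (EuclideanSpace.single i 1) * (ψ (x, h x)).1 i)) :=
          (integrable_finset_sum (μ := volume) Finset.univ
            (f := fun i (x : EuclideanSpace ℝ (Fin n)) =>
              fderiv ℝ h x (EuclideanSpace.single i 1) * (ψ (x, h x)).1 i)
            (fun i _ => int_a i)).neg
        rw [hrw, integral_add hneg int_b, integral_neg,
          integral_finset_sum (μ := volume) Finset.univ
            (f := fun i (x : EuclideanSpace ℝ (Fin n)) =>
              fderiv ℝ h x (EuclideanSpace.single i 1) * (ψ (x, h x)).1 i)
            (fun i _ => int_a i)]
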